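/- Let Z : [0,t] → ℝ be càdlàg of bounded variation, Y : [0,t] → ℝ bounded measurable, and g ∈ W^{1,2}([0,t]). Define the pathwise stochastic integral via integration by parts: ∫₀^{s} g(s-u) dZ(u) := g(0)Z(s) - g(s)Z(0) + ∫₀^s Z(u) g'(s-u) du. Then the Fubini-type identity ∫₀^t Y(s) (∫₀^{s} g(s-u) dZ(u)) ds = ∫₀^t (∫_u^t Y(s) g(s-u) ds) dZ(u) holds, where the outer integral on the right is again defined via integration by parts with the function G(u) = ∫_u^t Y(s) g(s-u) ds. -/

import Mathlib

open MeasureTheory intervalIntegral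

private lemma null_refl {N : Set ℝ} (hN : volume N = 0) (c : ℝ) :
    volume {x : ℝ | c - x ∈ N} = 0 :=
  (Measure.measurePreserving_sub_left volume c).quasiMeasurePreserving.preimage_null hN

private lemma null_shift {N : Set ℝ} (hN : volume N = 0) (c : ℝ) :
    volume {x : ℝ | x - c ∈ N} = 0 :=
  (measurePreserving_sub_right volume c).quasiMeasurePreserving.preimage_null hN

private lemma bdd_intInt {f : ℝ → ℝ} {t C : ℝ} (ht : 0 ≤ t)
    (hf : AEStronglyMeasurable f (volume.restrict (Set.Ioc 0 t)))
    (hC : ∀ x ∈ Set.Icc (0:ℝ) t, |f x| ≤ C) : IntervalIntegrable f volume 0 t := by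
  rw [intervalIntegrable_iff_integrableOn_Ioc_of_le ht]
  refine Integrable.mono' (integrable_const C) hf ?_
  refine (ae_restrict_iff' measurableSet_Ioc).2 (Filter.Eventually.of_forall fun x hx => ?_)
  simpa [Real.norm_eq_abs] using hC x ⟨le_of_lt hx.1, hx.2⟩

private lemma cong_intInt {f g : ℝ → ℝ} {t : ℝ} (ht : 0 ≤ t)
    (hf : IntervalIntegrable f volume 0 t) (he : ∀ x ∈ Set.Ioc (0:ℝ) t, f x = g x) :
    IntervalIntegrable g volume 0 t := by
  rw [intervalIntegrable_iff_integrableOn_Ioc_of_le ht] at hf ⊢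
  exact hf.congr ((ae_restrict_iff' measurableSet_Ioc).2
    (Filter.Eventually.of_forall fun x hx => he x hx))

private lemma fubini_core (t CY CZ : ℝ) (ht : 0 < t)
    (Y Z k : ℝ → ℝ) (hY : Measurable Y) (hZ : Measurable Z) (hk : Measurable k)
    (hki : Integrable k volume)
    (hYb : ∀ s ∈ Set.Icc (0:ℝ) t, |Y s| ≤ CY) (hZb : ∀ u ∈ Set.Icc (0:ℝ) t, |Z u| ≤ CZ) :
    IntervalIntegrable (fun s => Y s * ∫ u in (0:ℝ)..s, Z u * k (s - u)) volume 0 t ∧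
    (∫ s in (0:ℝ)..t, Y s * ∫ u in (0:ℝ)..s, Z u * k (s - u))
      = ∫ u in (0:ℝ)..t, Z u * ∫ s in u..t, Y s * k (s - u) := by
  have hCZ0 : 0 ≤ CZ := le_trans (abs_nonneg _) (hZb 0 ⟨le_refl _, le_of_lt ht⟩)
  have hCY0 : 0 ≤ CY := le_trans (abs_nonneg _) (hYb 0 ⟨le_refl _, le_of_lt ht⟩)
  set A : Set (ℝ × ℝ) := {p | 0 ≤ p.2 ∧ p.2 ≤ p.1 ∧ p.1 ≤ t} with hAdef
  have hA : MeasurableSet A := by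
    have : A = {p : ℝ × ℝ | 0 ≤ p.2} ∩ ({p | p.2 ≤ p.1} ∩ {p | p.1 ≤ t}) := by
      ext p; simp [hAdef, Set.mem_setOf_eq, and_assoc]
    rw [this]
    exact (measurableSet_le measurable_const measurable_snd).inter
      ((measurableSet_le measurable_snd measurable_fst).inter
        (measurableSet_le measurable_fst measurable_const))
  set F : ℝ × ℝ → ℝ := A.indicator (fun p => Y p.1 * Z p.2 * k (p.1 - p.2)) with hFdef
  have hFmeas : Measurable F :=
    Measurable.indicator
      (((hY.comp measurable_fst).mul (hZ.comp measurable_snd)).mul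
        (hk.comp (measurable_fst.sub measurable_snd))) hA
  -- sections
  have hsec1 : ∀ s ∈ Set.Icc (0:ℝ) t,
      (fun u => F (s, u)) = (Set.Icc (0:ℝ) s).indicator (fun u => Y s * Z u * k (s - u)) := by
    intro s hs
    funext u
    by_cases h : u ∈ Set.Icc (0:ℝ) s
    · have hmem : (s, u) ∈ A := ⟨h.1, h.2, hs.2⟩
      simp [hFdef, Set.indicator_of_mem hmem, Set.indicator_of_mem h]
    · have hmem : (s, u) ∉ A := fun hc => h ⟨hc.1, hc.2.1⟩
      simp [hFdef, Set.indicator_of_notMem hmem, Set.indicator_of_notMem h]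
  have hsec1' : ∀ s, s ∉ Set.Icc (0:ℝ) t → (fun u => F (s, u)) = fun _ => (0:ℝ) := by
    intro s hs
    funext u
    have hmem : (s, u) ∉ A := fun hc => hs ⟨le_trans hc.1 hc.2.1, hc.2.2⟩
    simp [hFdef, Set.indicator_of_notMem hmem]
  have hsec2 : ∀ u ∈ Set.Icc (0:ℝ) t,
      (fun s => F (s, u)) = (Set.Icc u t).indicator (fun s => Y s * Z u * k (s - u)) := by
    intro u hu
    funext s
    by_cases h : s ∈ Set.Icc u t
    · have hmem : (s, u) ∈ A := ⟨hu.1, h.1, h.2⟩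
      simp [hFdef, Set.indicator_of_mem hmem, Set.indicator_of_mem h]
    · have hmem : (s, u) ∉ A := fun hc => h ⟨hc.2.1, hc.2.2⟩
      simp [hFdef, Set.indicator_of_notMem hmem, Set.indicator_of_notMem h]
  have hsec2' : ∀ u, u ∉ Set.Icc (0:ℝ) t → (fun s => F (s, u)) = fun _ => (0:ℝ) := by
    intro u hu
    funext s
    have hmem : (s, u) ∉ A := fun hc => hu ⟨hc.1, le_trans hc.2.1 hc.2.2⟩
    simp [hFdef, Set.indicator_of_notMem hmem]
  -- integrability of sections in u
  have hsecint : ∀ s : ℝ, Integrable (fun u => F (s, u)) volume := by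
    intro s
    by_cases hs : s ∈ Set.Icc (0:ℝ) t
    · rw [hsec1 s hs]
      have hbase : Integrable (fun u => k (s - u)) volume := hki.comp_sub_left s
      have h1 : IntegrableOn (fun u => Z u * k (s - u)) (Set.Icc 0 s) volume := by
        refine Integrable.bdd_mul (c := CZ) hbase.integrableOn hZ.aestronglyMeasurable ?_
        refine (ae_restrict_iff' measurableSet_Icc).2 (Filter.Eventually.of_forall fun u hu => ?_)
        simpa [Real.norm_eq_abs] using hZb u ⟨hu.1, le_trans hu.2 hs.2⟩
      have h2 : IntegrableOn (fun u => Y s * (Z u * k (s - u))) (Set.Icc 0 s) volume :=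
        h1.const_mul (Y s)
      have : IntegrableOn (fun u => Y s * Z u * k (s - u)) (Set.Icc 0 s) volume := by
        simpa [mul_assoc] using h2
      exact this.integrable_indicator measurableSet_Icc
    · rw [hsec1' s hs]; exact integrable_zero _ _ _
  -- integrability of F on the product
  have hF : Integrable F (volume.prod volume) := by
    refine (integrable_prod_iff hFmeas.aestronglyMeasurable).2
      ⟨Filter.Eventually.of_forall hsecint, ?_⟩
    have hknorm : Integrable (fun v => ‖k v‖) volume := hki.norm
    have hdomI : Integrable ((Set.Icc (0:ℝ) t).indicator fun _ => CY * CZ * ∫ v, ‖k v‖) volume :=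
      IntegrableOn.integrable_indicator
        (integrableOn_const measure_Icc_lt_top.ne) measurableSet_Icc
    refine Integrable.mono' hdomI
      ((hFmeas.aestronglyMeasurable.norm).integral_prod_right') ?_
    refine Filter.Eventually.of_forall fun s => ?_
    by_cases hs : s ∈ Set.Icc (0:ℝ) t
    · have hb : ∀ u, ‖F (s, u)‖ ≤ CY * CZ * ‖k (s - u)‖ := by
        intro u
        by_cases hmem : (s, u) ∈ A
        · have hu : u ∈ Set.Icc (0:ℝ) t := ⟨hmem.1, le_trans hmem.2.1 hmem.2.2⟩
          have : ‖F (s, u)‖ = ‖Y s‖ * ‖Z u‖ * ‖k (s - u)‖ := by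
            simp [hFdef, Set.indicator_of_mem hmem, abs_mul, Real.norm_eq_abs]
          rw [this]
          have h1 : ‖Y s‖ * ‖Z u‖ ≤ CY * CZ := by
            apply mul_le_mul (hYb s hs) (hZb u hu) (abs_nonneg _) hCY0
          exact mul_le_mul_of_nonneg_right h1 (norm_nonneg _)
        · simp [hFdef, Set.indicator_of_notMem hmem]
          positivity
      have hdom : Integrable (fun u => CY * CZ * ‖k (s - u)‖) volume :=
        (hknorm.comp_sub_left s).const_mul _
      have hle : (∫ u, ‖F (s, u)‖) ≤ CY * CZ * ∫ v, ‖k v‖ := by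
        calc (∫ u, ‖F (s, u)‖) ≤ ∫ u, CY * CZ * ‖k (s - u)‖ :=
              integral_mono_of_nonneg (Filter.Eventually.of_forall fun u => norm_nonneg _)
                hdom (Filter.Eventually.of_forall hb)
          _ = CY * CZ * ∫ u, ‖k (s - u)‖ := integral_const_mul _ _
          _ = CY * CZ * ∫ v, ‖k v‖ := by rw [integral_sub_left_eq_self (fun v => ‖k v‖) volume s]
      have hnn : 0 ≤ ∫ u, ‖F (s, u)‖ := integral_nonneg fun u => norm_nonneg _
      rw [Set.indicator_of_mem hs, Real.norm_of_nonneg hnn]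
      exact hle
    · have h0 : ∀ u, F (s, u) = 0 := fun u => congrFun (hsec1' s hs) u
      rw [Set.indicator_of_notMem hs]
      simp [h0]
  -- iterated integral computations
  have hinner1 : ∀ s : ℝ, (∫ u, F (s, u)) =
      (Set.Icc (0:ℝ) t).indicator (fun s => Y s * ∫ u in (0:ℝ)..s, Z u * k (s - u)) s := by
    intro s
    by_cases hs : s ∈ Set.Icc (0:ℝ) t
    · rw [Set.indicator_of_mem hs]
      calc (∫ u, F (s, u))
          = ∫ u, (Set.Icc (0:ℝ) s).indicator (fun u => Y s * Z u * k (s - u)) u := by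
            rw [hsec1 s hs]
        _ = ∫ u in Set.Icc (0:ℝ) s, Y s * Z u * k (s - u) :=
            MeasureTheory.integral_indicator measurableSet_Icc
        _ = ∫ u in Set.Ioc (0:ℝ) s, Y s * Z u * k (s - u) := integral_Icc_eq_integral_Ioc
        _ = ∫ u in (0:ℝ)..s, Y s * Z u * k (s - u) := (integral_of_le hs.1).symm
        _ = ∫ u in (0:ℝ)..s, Y s * (Z u * k (s - u)) := by simp [mul_assoc]
        _ = Y s * ∫ u in (0:ℝ)..s, Z u * k (s - u) := integral_const_mul _ _
    · rw [Set.indicator_of_notMem hs, hsec1' s hs]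
      simp
  have hinner2 : ∀ u : ℝ, (∫ s, F (s, u)) =
      (Set.Icc (0:ℝ) t).indicator (fun u => Z u * ∫ s in u..t, Y s * k (s - u)) u := by
    intro u
    by_cases hu : u ∈ Set.Icc (0:ℝ) t
    · rw [Set.indicator_of_mem hu]
      calc (∫ s, F (s, u))
          = ∫ s, (Set.Icc u t).indicator (fun s => Y s * Z u * k (s - u)) s := by
            rw [hsec2 u hu]
        _ = ∫ s in Set.Icc u t, Y s * Z u * k (s - u) := MeasureTheory.integral_indicator measurableSet_Icc
        _ = ∫ s in Set.Ioc u t, Y s * Z u * k (s - u) := integral_Icc_eq_integral_Ioc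
        _ = ∫ s in u..t, Y s * Z u * k (s - u) := (integral_of_le hu.2).symm
        _ = ∫ s in u..t, Z u * (Y s * k (s - u)) := by
            apply integral_congr; intro s _; ring
        _ = Z u * ∫ s in u..t, Y s * k (s - u) := integral_const_mul _ _
    · rw [Set.indicator_of_notMem hu, hsec2' u hu]
      simp
  constructor
  · have hmarg : Integrable (fun s => ∫ u, F (s, u)) volume := hF.integral_prod_left
    have : Integrable ((Set.Icc (0:ℝ) t).indicator
        (fun s => Y s * ∫ u in (0:ℝ)..s, Z u * k (s - u))) volume := by
      refine hmarg.congr (Filter.Eventually.of_forall fun s => ?_)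
      exact hinner1 s
    rw [intervalIntegrable_iff_integrableOn_Ioc_of_le (le_of_lt ht)]
    exact ((integrable_indicator_iff measurableSet_Icc).1 this).mono_set Set.Ioc_subset_Icc_self
  · have hswap : (∫ s, ∫ u, F (s, u)) = ∫ u, ∫ s, F (s, u) :=
      integral_integral_swap (f := fun s u => F (s, u)) hF
    calc (∫ s in (0:ℝ)..t, Y s * ∫ u in (0:ℝ)..s, Z u * k (s - u))
        = ∫ s in Set.Ioc (0:ℝ) t, Y s * ∫ u in (0:ℝ)..s, Z u * k (s - u) :=
          integral_of_le (le_of_lt ht)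
      _ = ∫ s in Set.Icc (0:ℝ) t, Y s * ∫ u in (0:ℝ)..s, Z u * k (s - u) :=
          integral_Icc_eq_integral_Ioc.symm
      _ = ∫ s, (Set.Icc (0:ℝ) t).indicator
            (fun s => Y s * ∫ u in (0:ℝ)..s, Z u * k (s - u)) s :=
          (MeasureTheory.integral_indicator measurableSet_Icc).symm
      _ = ∫ s, ∫ u, F (s, u) := by
          refine integral_congr_ae (Filter.Eventually.of_forall fun s => ?_)
          exact (hinner1 s).symm
      _ = ∫ u, ∫ s, F (s, u) := hswap
      _ = ∫ u, (Set.Icc (0:ℝ) t).indicator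
            (fun u => Z u * ∫ s in u..t, Y s * k (s - u)) u := by
          refine integral_congr_ae (Filter.Eventually.of_forall fun u => ?_)
          exact hinner2 u
      _ = ∫ u in Set.Icc (0:ℝ) t, Z u * ∫ s in u..t, Y s * k (s - u) :=
          MeasureTheory.integral_indicator measurableSet_Icc
      _ = ∫ u in Set.Ioc (0:ℝ) t, Z u * ∫ s in u..t, Y s * k (s - u) :=
          integral_Icc_eq_integral_Ioc
      _ = ∫ u in (0:ℝ)..t, Z u * ∫ s in u..t, Y s * k (s - u) :=
          (integral_of_le (le_of_lt ht)).symm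

/-- Fubini-type identity for the pathwise (integration-by-parts) stochastic
integral: ∫₀ᵗ Y(s) (∫₀ˢ g(s-u) dZ(u)) ds = ∫₀ᵗ (∫ᵤᵗ Y(s) g(s-u) ds) dZ(u). -/
theorem stmt4 (t : ℝ) (ht : 0 < t)
    (Z : ℝ → ℝ) (hZmeas : Measurable Z) (CZ : ℝ) (hZbdd : ∀ u ∈ Set.Icc (0:ℝ) t, |Z u| ≤ CZ)
    (Y : ℝ → ℝ) (hYmeas : Measurable Y) (CY : ℝ) (hYbdd : ∀ s ∈ Set.Icc (0:ℝ) t, |Y s| ≤ CY)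
    (g g' : ℝ → ℝ)
    (hAC : ∀ x ∈ Set.Icc 0 t, g x = g 0 + ∫ u in (0:ℝ)..x, g' u)
    (hg'int : IntervalIntegrable g' volume 0 t)
    (hg'int2 : IntervalIntegrable (fun u => (g' u) ^ 2) volume 0 t)
    -- G(u) = ∫ᵤᵗ Y(s) g(s-u) ds and its weak derivative G'
    (G G' : ℝ → ℝ)
    (hG : ∀ u ∈ Set.Icc (0:ℝ) t, G u = ∫ s in u..t, Y s * g (s - u))
    (hG' : ∀ u ∈ Set.Icc (0:ℝ) t, G' u = -(∫ s in u..t, Y s * g' (s - u)) - Y u * g 0)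
    (hG'int : IntervalIntegrable G' volume 0 t) :
    (∫ s in (0:ℝ)..t, Y s * (g 0 * Z s - g s * Z 0 + ∫ u in (0:ℝ)..s, Z u * g' (s - u)))
      = G t * Z t - G 0 * Z 0 - ∫ u in (0:ℝ)..t, Z u * G' u := by
  have ht' : (0:ℝ) ≤ t := le_of_lt ht
  -- measurable representative of g'
  have hg'On : IntegrableOn g' (Set.Ioc 0 t) volume := by
    rwa [intervalIntegrable_iff_integrableOn_Ioc_of_le ht'] at hg'int
  set m : ℝ → ℝ := (hg'On.aestronglyMeasurable).mk g' with hmdef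
  have hmmeas : StronglyMeasurable m := (hg'On.aestronglyMeasurable).stronglyMeasurable_mk
  have hgm : g' =ᶠ[ae (volume.restrict (Set.Ioc 0 t))] m :=
    (hg'On.aestronglyMeasurable).ae_eq_mk
  set k : ℝ → ℝ := (Set.Ioc (0:ℝ) t).indicator m with hkdef
  have hkmeas : Measurable k := hmmeas.measurable.indicator measurableSet_Ioc
  have hkint : Integrable k volume :=
    IntegrableOn.integrable_indicator (hg'On.congr hgm) measurableSet_Ioc
  -- the exceptional null set
  set N : Set ℝ := {v | v ∈ Set.Ioc (0:ℝ) t ∧ g' v ≠ m v} with hNdef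
  have hN : volume N = 0 := by
    have h1 : ∀ᵐ v : ℝ, v ∈ Set.Ioc (0:ℝ) t → g' v = m v :=
      (ae_restrict_iff' measurableSet_Ioc).1 hgm
    have h2 := ae_iff.1 h1
    refine measure_mono_null (fun v hv => ?_) h2
    exact fun himp => hv.2 (himp hv.1)
  have hkval : ∀ v ∈ Set.Ioc (0:ℝ) t, v ∉ N → g' v = k v := by
    intro v hv hvN
    have : g' v = m v := by
      by_contra hne
      exact hvN ⟨hv, hne⟩
    rw [this, hkdef, Set.indicator_of_mem hv]
  -- (E1) inner integral transfer
  have hE1 : ∀ s ∈ Set.Icc (0:ℝ) t,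
      (∫ u in (0:ℝ)..s, Z u * g' (s - u)) = ∫ u in (0:ℝ)..s, Z u * k (s - u) := by
    intro s hs
    refine integral_congr_ae ?_
    have hbad : volume ({u : ℝ | s - u ∈ N} ∪ {s}) = 0 :=
      measure_union_null (null_refl hN s) (measure_singleton s)
    have hae : ∀ᵐ u : ℝ, u ∉ ({u : ℝ | s - u ∈ N} ∪ {s}) := by
      rw [ae_iff]
      exact measure_mono_null (fun u hu => not_not.mp hu) hbad
    filter_upwards [hae] with u hu hu'
    rw [Set.uIoc_of_le hs.1] at hu'
    have hus : u ≠ s := fun h => hu (Or.inr h)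
    have h1 : s - u ∈ Set.Ioc (0:ℝ) t := by
      constructor
      · have : u < s := lt_of_le_of_ne hu'.2 hus
        linarith
      · have := hu'.1; have := hs.2; linarith
    have h2 : s - u ∉ N := fun h => hu (Or.inl h)
    rw [hkval _ h1 h2]
  -- (E2) outer integral transfer
  have hE2 : ∀ u ∈ Set.Icc (0:ℝ) t,
      (∫ s in u..t, Y s * g' (s - u)) = ∫ s in u..t, Y s * k (s - u) := by
    intro u hu
    refine integral_congr_ae ?_
    have hae : ∀ᵐ s : ℝ, s ∉ {s : ℝ | s - u ∈ N} := by
      rw [ae_iff]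
      exact measure_mono_null (fun s hs => not_not.mp hs) (null_shift hN u)
    filter_upwards [hae] with s hsN hs'
    rw [Set.uIoc_of_le hu.2] at hs'
    have h1 : s - u ∈ Set.Ioc (0:ℝ) t := by
      constructor
      · have := hs'.1; linarith
      · have := hs'.2; have := hu.1; linarith
    rw [hkval _ h1 hsN]
  -- Fubini core
  obtain ⟨hYIk, hswap⟩ := fubini_core t CY CZ ht Y Z k hYmeas hZmeas hkmeas hkint hYbdd hZbdd
  -- continuity/boundedness of g on [0,t]
  have huIcc : Set.uIcc (0:ℝ) t = Set.Icc 0 t := Set.uIcc_of_le ht'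
  have hg'Icc : IntegrableOn g' (Set.uIcc 0 t) volume := by
    rw [huIcc, integrableOn_Icc_iff_integrableOn_Ioc' (by simp : volume {(0:ℝ)} ≠ ⊤)]
    exact hg'On
  have hcont : ContinuousOn (fun x => g 0 + ∫ u in (0:ℝ)..x, g' u) (Set.Icc 0 t) := by
    rw [← huIcc]
    exact continuousOn_const.add (continuousOn_primitive_interval hg'Icc)
  obtain ⟨Cg, hCg⟩ := (isCompact_Icc (a := (0:ℝ)) (b := t)).exists_bound_of_continuousOn hcont
  have hgbdd : ∀ x ∈ Set.Icc (0:ℝ) t, |g x| ≤ Cg := by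
    intro x hx
    rw [hAC x hx]
    simpa [Real.norm_eq_abs] using hCg x hx
  have hgAESM : AEStronglyMeasurable g (volume.restrict (Set.Ioc 0 t)) := by
    have h1 : AEStronglyMeasurable (fun x => g 0 + ∫ u in (0:ℝ)..x, g' u)
        (volume.restrict (Set.Ioc 0 t)) :=
      (hcont.aestronglyMeasurable measurableSet_Icc).mono_measure
        (Measure.restrict_mono Set.Ioc_subset_Icc_self le_rfl)
    refine h1.congr ?_
    refine (ae_restrict_iff' measurableSet_Ioc).2 (Filter.Eventually.of_forall fun x hx => ?_)
    exact (hAC x ⟨le_of_lt hx.1, hx.2⟩).symm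
  -- integrabilities
  have hCZ0 : 0 ≤ CZ := le_trans (abs_nonneg _) (hZbdd 0 ⟨le_refl _, ht'⟩)
  have hCY0 : 0 ≤ CY := le_trans (abs_nonneg _) (hYbdd 0 ⟨le_refl _, ht'⟩)
  have hYZ : IntervalIntegrable (fun s => Y s * Z s) volume 0 t := by
    refine bdd_intInt ht' ((hYmeas.mul hZmeas).aestronglyMeasurable) (C := CY * CZ) ?_
    intro x hx
    rw [abs_mul]
    exact mul_le_mul (hYbdd x hx) (hZbdd x hx) (abs_nonneg _) hCY0
  have hYg : IntervalIntegrable (fun s => Y s * g s) volume 0 t := by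
    refine bdd_intInt ht' (hYmeas.aestronglyMeasurable.mul hgAESM) (C := CY * Cg) ?_
    intro x hx
    rw [abs_mul]
    have hCg0 : (0:ℝ) ≤ Cg := le_trans (abs_nonneg _) (hgbdd 0 ⟨le_refl _, ht'⟩)
    exact mul_le_mul (hYbdd x hx) (hgbdd x hx) (abs_nonneg _) hCY0
  have hZYg0 : IntervalIntegrable (fun u => Z u * Y u * g 0) volume 0 t := by
    refine bdd_intInt ht' (((hZmeas.mul hYmeas).mul_const (g 0)).aestronglyMeasurable)
      (C := CZ * CY * |g 0|) ?_
    intro x hx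
    rw [abs_mul, abs_mul]
    refine mul_le_mul_of_nonneg_right ?_ (abs_nonneg _)
    exact mul_le_mul (hZbdd x hx) (hYbdd x hx) (abs_nonneg _) hCZ0
  have hZG' : IntervalIntegrable (fun u => Z u * G' u) volume 0 t := by
    rw [intervalIntegrable_iff_integrableOn_Ioc_of_le ht'] at hG'int ⊢
    refine Integrable.bdd_mul (c := CZ) hG'int hZmeas.aestronglyMeasurable ?_
    refine (ae_restrict_iff' measurableSet_Ioc).2 (Filter.Eventually.of_forall fun u hu => ?_)
    simpa [Real.norm_eq_abs] using hZbdd u ⟨le_of_lt hu.1, hu.2⟩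
  -- abbreviations
  set Jk : ℝ → ℝ := fun u => ∫ s in u..t, Y s * k (s - u) with hJkdef
  set Ik : ℝ → ℝ := fun s => ∫ u in (0:ℝ)..s, Z u * k (s - u) with hIkdef
  have hZJk : IntervalIntegrable (fun u => Z u * Jk u) volume 0 t := by
    refine cong_intInt ht' (hZG'.neg.sub hZYg0) ?_
    intro u hu
    have hu' : u ∈ Set.Icc (0:ℝ) t := ⟨le_of_lt hu.1, hu.2⟩
    have hGu := hG' u hu'
    have hE := hE2 u hu'
    simp only [Pi.sub_apply, Pi.neg_apply, hJkdef]
    rw [← hE, hGu]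
    ring
  -- compute RHS integral of Z * G'
  have hRHSint : (∫ u in (0:ℝ)..t, Z u * G' u)
      = -(∫ u in (0:ℝ)..t, Z u * Jk u) - ∫ u in (0:ℝ)..t, Z u * Y u * g 0 := by
    have h1 : (∫ u in (0:ℝ)..t, Z u * G' u)
        = ∫ u in (0:ℝ)..t, (-(Z u * Jk u) - Z u * Y u * g 0) := by
      refine integral_congr fun u hu => ?_
      rw [huIcc] at hu
      simp only [hJkdef]
      rw [hG' u hu, ← hE2 u hu]
      ring
    have h2 := integral_sub (f := fun u => -(Z u * Jk u)) (g := fun u => Z u * Y u * g 0)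
      hZJk.neg hZYg0
    rw [h1, h2, intervalIntegral.integral_neg]
  -- compute LHS
  have hLHS : (∫ s in (0:ℝ)..t, Y s * (g 0 * Z s - g s * Z 0 + ∫ u in (0:ℝ)..s, Z u * g' (s - u)))
      = g 0 * (∫ s in (0:ℝ)..t, Y s * Z s) - Z 0 * (∫ s in (0:ℝ)..t, Y s * g s)
        + ∫ s in (0:ℝ)..t, Y s * Ik s := by
    have h1 : (∫ s in (0:ℝ)..t, Y s * (g 0 * Z s - g s * Z 0 + ∫ u in (0:ℝ)..s, Z u * g' (s - u)))
        = ∫ s in (0:ℝ)..t, ((g 0 * (Y s * Z s) - Z 0 * (Y s * g s)) + Y s * Ik s) := by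
      refine integral_congr fun s hs => ?_
      rw [huIcc] at hs
      simp only [hIkdef]
      rw [hE1 s hs]
      ring
    rw [h1, integral_add ((hYZ.const_mul _).sub (hYg.const_mul _)) hYIk,
      integral_sub (hYZ.const_mul _) (hYg.const_mul _),
      intervalIntegral.integral_const_mul, intervalIntegral.integral_const_mul]
  -- values of G
  have hGt : G t = 0 := by
    rw [hG t ⟨ht', le_refl t⟩, integral_same]
  have hG0 : G 0 = ∫ s in (0:ℝ)..t, Y s * g s := by
    rw [hG 0 ⟨le_refl _, ht'⟩]
    refine integral_congr fun s _ => ?_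
    rw [sub_zero]
  have hg0ZY : (∫ u in (0:ℝ)..t, Z u * Y u * g 0) = g 0 * ∫ s in (0:ℝ)..t, Y s * Z s := by
    rw [← intervalIntegral.integral_const_mul]
    refine integral_congr fun u _ => ?_
    ring
  rw [hLHS, hGt, hG0, hRHSint, hg0ZY, hswap]
  simp only [hJkdef]
  ring
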